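/- For every finite simple graph G on vertex set {1,…,n} and every k with 2 ≤ k ≤ n, the k-th level exact subgraph coloring bounds satisfy t^{k-1}(G) ≤ t^k(G) and t^n(G) ≤ χ(G), where t^k(G) = inf{t : [[t, 1^T],[1, X]] ∈ X^C and X_I ∈ COL(G_I) for every I ⊆ {1,…,n} with |I| = k}. -/

import Mathlib

open Matrix BigOperators

noncomputable section

/-- Bordered matrix `[[t, xᵀ],[x, X]]` indexed by `Unit ⊕ Fin n`. -/
def border {n : ℕ} (t : ℝ) (x : Fin n → ℝ) (X : Matrix (Fin n) (Fin n) ℝ) :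
    Matrix (Unit ⊕ Fin n) (Unit ⊕ Fin n) ℝ :=
  Matrix.fromBlocks (fun _ _ => t) (fun _ j => x j) (fun i _ => x i) X

/-- `s` is a 0/1 vector whose support is a stable set of `G`. -/
def isStableVec {n : ℕ} (G : SimpleGraph (Fin n)) (s : Fin n → ℝ) : Prop :=
  (∀ i, s i = 0 ∨ s i = 1) ∧ ∀ i j, G.Adj i j → s i * s j = 0

/-- `s` lists the columns of a stable-set partition matrix of `G`. -/
def isSSPM {n k : ℕ} (G : SimpleGraph (Fin n)) (s : Fin k → Fin n → ℝ) : Prop :=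
  (∀ i, isStableVec G (s i)) ∧ ∀ v, ∃! i, s i v = 1

/-- The Gram matrix `X = S Sᵀ` of the columns `s i`. -/
def gram {n k : ℕ} (s : Fin k → Fin n → ℝ) : Matrix (Fin n) (Fin n) ℝ :=
  Matrix.of fun a b => ∑ i, s i a * s i b

/-- `X` is a coloring matrix of `G`. -/
def isColoringMatrix {n : ℕ} (G : SimpleGraph (Fin n))
    (X : Matrix (Fin n) (Fin n) ℝ) : Prop :=
  ∃ k : ℕ, ∃ s : Fin k → Fin n → ℝ, isSSPM G s ∧ X = gram s

/-- `COL(G)`: convex hull of the coloring matrices of `G`. -/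
def COL {n : ℕ} (G : SimpleGraph (Fin n)) : Set (Matrix (Fin n) (Fin n) ℝ) :=
  convexHull ℝ {X | isColoringMatrix G X}

/-- The chromatic number: smallest number of stable sets partitioning the vertex set. -/
def chrNum {n : ℕ} (G : SimpleGraph (Fin n)) : ℕ :=
  sInf {k | ∃ s : Fin k → Fin n → ℝ, isSSPM G s}

/-- The `k`-th level exact subgraph coloring bound: subsets of cardinality `k` are
represented by injective maps `f : Fin k → Fin n`. -/
def tLevel {n : ℕ} (G : SimpleGraph (Fin n)) (k : ℕ) : ℝ :=
  sInf {t : ℝ | ∃ X : Matrix (Fin n) (Fin n) ℝ,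
    (border t (fun _ => 1) X).PosSemidef ∧ (∀ i, X i i = 1) ∧
    (∀ i j, G.Adj i j → X i j = 0) ∧
    ∀ f : Fin k → Fin n, Function.Injective f → X.submatrix f f ∈ COL (G.comap f)}

-- auxiliary lemmas

lemma sum_eq_one_of_unique {c : ℕ} {g : Fin c → ℝ}
    (h01 : ∀ i, g i = 0 ∨ g i = 1) (hu : ∃! i, g i = 1) :
    ∑ i, g i = 1 := by
  obtain ⟨i0, hi0, huniq⟩ := hu
  rw [Finset.sum_eq_single i0]
  · exact hi0
  · intro j _ hj
    rcases h01 j with h | h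
    · exact h
    · exact absurd (huniq j h) hj
  · simp

lemma coloring_submatrix {p m : ℕ} (H : SimpleGraph (Fin p)) (e : Fin m → Fin p)
    {Y : Matrix (Fin p) (Fin p) ℝ} (hY : isColoringMatrix H Y) :
    isColoringMatrix (H.comap e) (Y.submatrix e e) := by
  obtain ⟨c, s, ⟨hstab, hcov⟩, rfl⟩ := hY
  refine ⟨c, fun i v => s i (e v), ⟨?_, ?_⟩, ?_⟩
  · intro i
    exact ⟨fun v => (hstab i).1 (e v), fun a b hab => (hstab i).2 _ _ hab⟩
  · intro v; exact hcov (e v)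
  · ext a b; simp [_root_.gram, Matrix.submatrix_apply]

def subL {p m : ℕ} (e : Fin m → Fin p) :
    Matrix (Fin p) (Fin p) ℝ →ₗ[ℝ] Matrix (Fin m) (Fin m) ℝ where
  toFun Y := Y.submatrix e e
  map_add' _ _ := rfl
  map_smul' _ _ := rfl

lemma COL_submatrix {p m : ℕ} (H : SimpleGraph (Fin p)) (e : Fin m → Fin p)
    {Y : Matrix (Fin p) (Fin p) ℝ} (hY : Y ∈ COL H) :
    Y.submatrix e e ∈ COL (H.comap e) := by
  have h1 : (subL e) Y ∈ (subL e) '' (COL H) := Set.mem_image_of_mem _ hY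
  rw [COL, (subL e).image_convexHull] at h1
  refine convexHull_mono ?_ h1
  rintro Z ⟨W, hW, rfl⟩
  exact coloring_submatrix H e hW

lemma gram_feasible {n c : ℕ} (G : SimpleGraph (Fin n))
    {s : Fin c → Fin n → ℝ} (hs : isSSPM G s) (k : ℕ) :
    (c : ℝ) ∈ {t : ℝ | ∃ X : Matrix (Fin n) (Fin n) ℝ,
      (border t (fun _ => 1) X).PosSemidef ∧ (∀ i, X i i = 1) ∧
      (∀ i j, G.Adj i j → X i j = 0) ∧
      ∀ f : Fin k → Fin n, Function.Injective f → X.submatrix f f ∈ COL (G.comap f)} := by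
  obtain ⟨hstab, hcov⟩ := hs
  have hsum : ∀ v, ∑ i, s i v = 1 := fun v =>
    sum_eq_one_of_unique (fun i => (hstab i).1 v) (hcov v)
  refine ⟨gram s, ?_, ?_, ?_, ?_⟩
  · set A : Matrix (Fin c) (Unit ⊕ Fin n) ℝ :=
      fun i p => Sum.elim (fun _ => (1:ℝ)) (s i) p with hA
    have hrepr : border (c : ℝ) (fun _ => 1) (gram s) = Aᴴ * A := by
      ext p q
      rcases p with p | a <;> rcases q with q | b <;>
        simp [border, Matrix.fromBlocks, _root_.gram, Matrix.mul_apply, hsum] <;> simp [hA, hsum]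
    rw [hrepr]
    exact Matrix.posSemidef_conjTranspose_mul_self A
  · intro i
    have : ∀ j, s j i * s j i = s j i := by
      intro j; rcases (hstab j).1 i with h | h <;> rw [h] <;> ring
    simp only [_root_.gram, Matrix.of_apply]
    rw [Finset.sum_congr rfl (fun j _ => this j), hsum]
  · intro i j hij
    simp only [_root_.gram, Matrix.of_apply]
    exact Finset.sum_eq_zero fun l _ => (hstab l).2 i j hij
  · intro f _
    exact COL_submatrix G f (subset_convexHull ℝ _ ⟨c, s, ⟨hstab, hcov⟩, rfl⟩)

lemma exists_sspm {n : ℕ} (G : SimpleGraph (Fin n)) :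
    ∃ s : Fin n → Fin n → ℝ, isSSPM G s := by
  refine ⟨fun i v => if v = i then 1 else 0, ⟨?_, ?_⟩⟩
  · intro i
    constructor
    · intro v; by_cases h : v = i <;> simp [h]
    · intro a b hab
      by_cases ha : a = i
      · have hb : b ≠ i := fun hb => hab.ne (hb ▸ ha ▸ rfl)
        simp [hb]
      · simp [ha]
  · intro v
    refine ⟨v, by simp, fun j hj => ?_⟩
    by_contra h
    simp [Ne.symm h] at hj

lemma feas_bddBelow {n k : ℕ} (G : SimpleGraph (Fin n)) :
    BddBelow {t : ℝ | ∃ X : Matrix (Fin n) (Fin n) ℝ,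
      (border t (fun _ => 1) X).PosSemidef ∧ (∀ i, X i i = 1) ∧
      (∀ i j, G.Adj i j → X i j = 0) ∧
      ∀ f : Fin k → Fin n, Function.Injective f → X.submatrix f f ∈ COL (G.comap f)} := by
  refine ⟨0, fun t ht => ?_⟩
  obtain ⟨X, hPSD, -, -, -⟩ := ht
  have h := hPSD.dotProduct_mulVec_nonneg (Pi.single (Sum.inl ()) 1)
  have : dotProduct (star (Pi.single (Sum.inl ()) 1 : Unit ⊕ Fin n → ℝ))
      ((border t (fun _ => 1) X) *ᵥ Pi.single (Sum.inl ()) 1) = t := by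
    simp [dotProduct, Matrix.mulVec, Fintype.sum_sum_type, Pi.single_apply, border, Matrix.fromBlocks]
  rw [this] at h
  exact h

theorem esh_coloring_monotone (n k : ℕ) (hk2 : 2 ≤ k) (hkn : k ≤ n)
    (G : SimpleGraph (Fin n)) :
    tLevel G (k - 1) ≤ tLevel G k ∧ tLevel G n ≤ (chrNum G : ℝ) := by
  obtain ⟨m, rfl⟩ : ∃ m, k = m + 1 := ⟨k - 1, by omega⟩
  obtain ⟨sI, hsI⟩ := exists_sspm G
  constructor
  · simp only [Nat.add_sub_cancel]
    apply csInf_le_csInf (feas_bddBelow G)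
      ⟨(n : ℝ), gram_feasible G hsI (m + 1)⟩
    rintro t ⟨X, hPSD, hdiag, hedge, hsub⟩
    refine ⟨X, hPSD, hdiag, hedge, fun g hg => ?_⟩
    -- extend g to an injective f : Fin (m+1) → Fin n
    have hnotsurj : ∃ a : Fin n, a ∉ Set.range g := by
      by_contra h
      push_neg at h
      have hsurj : Function.Surjective g := fun a => h a
      have := Fintype.card_le_of_surjective g hsurj
      simp at this
      omega
    obtain ⟨a, ha⟩ := hnotsurj
    set f : Fin (m + 1) → Fin n := Fin.snoc g a with hf
    have hfc : ∀ i : Fin m, f i.castSucc = g i := fun i => by simp [hf]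
    have hfl : f (Fin.last m) = a := by simp [hf]
    have hfinj : Function.Injective f := by
      intro i j hij
      induction i using Fin.lastCases with
      | last =>
        induction j using Fin.lastCases with
        | last => rfl
        | cast j =>
          rw [hfl, hfc] at hij
          exact absurd ⟨j, hij.symm⟩ ha
      | cast i =>
        induction j using Fin.lastCases with
        | last =>
          rw [hfl, hfc] at hij
          exact absurd ⟨i, hij⟩ ha
        | cast j =>
          rw [hfc, hfc] at hij
          exact congrArg Fin.castSucc (hg hij)
    have hmem := COL_submatrix (G.comap f) Fin.castSucc (hsub f hfinj)
    have hcomp : f ∘ Fin.castSucc = g := funext hfc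
    have h1 : (X.submatrix f f).submatrix Fin.castSucc Fin.castSucc = X.submatrix g g := by
      rw [Matrix.submatrix_submatrix, hcomp]
    have h2 : (G.comap f).comap Fin.castSucc = G.comap g := by
      rw [show (G.comap f).comap Fin.castSucc = G.comap (f ∘ Fin.castSucc) from rfl, hcomp]
    rw [h1, h2] at hmem
    exact hmem
  · have hmem : chrNum G ∈ {k | ∃ s : Fin k → Fin n → ℝ, isSSPM G s} :=
      Nat.sInf_mem ⟨n, sI, hsI⟩
    obtain ⟨s, hs⟩ := hmem
    exact csInf_le (feas_bddBelow G) (gram_feasible G hs n)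

end
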